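/- Utilitarian PoC lower bound for even cycles: on a cycle with 2k vertices, let agent 1 value each odd vertex at 1/k and agent 2 value each even vertex at 1/k. The unconstrained optimal utilitarian welfare is 2, while every connected allocation to two agents (a partition of the cycle into at most two arcs) has utilitarian welfare at most (k+1)/k. Hence the utilitarian PoC of the cycle on 2k vertices is at least 2k/(k+1). -/

import Mathlib

def ConnB {V : Type*} (G : SimpleGraph V) (s : Finset V) : Prop :=
  s = ∅ ∨ (G.induce (s : Set V)).Connected

def IsAlloc {V : Type*} [Fintype V] [DecidableEq V] {n : ℕ} (A : Fin n → Finset V) : Prop :=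
  (∀ i j : Fin n, i ≠ j → Disjoint (A i) (A j)) ∧ Finset.univ.biUnion A = Finset.univ

/-- The cycle on `m` vertices `0 — 1 — ⋯ — (m-1) — 0`. -/
def cycleGraph (m : ℕ) : SimpleGraph (Fin m) where
  Adj x y := x ≠ y ∧ ((x.val + 1) % m = y.val ∨ (y.val + 1) % m = x.val)
  symm := ⟨by rintro x y ⟨h1, h2⟩; exact ⟨h1.symm, h2.symm⟩⟩
  loopless := ⟨by rintro x ⟨h1, _⟩; exact h1 rfl⟩

section aux
variable {m : ℕ}

lemma succ_val [NeZero m] (a : Fin m) : (a + 1 : Fin m).val = (a.val + 1) % m := by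
  rw [Fin.val_add, Fin.val_one']
  conv_rhs => rw [Nat.add_mod]
  rw [Nat.mod_eq_of_lt a.isLt]

lemma cyc_adj_fin [NeZero m] {a x : Fin m} (h : (cycleGraph m).Adj a x) :
    x = a + 1 ∨ a = x + 1 := by
  obtain ⟨-, h | h⟩ := h
  · left; apply Fin.ext; rw [succ_val]; exact h.symm
  · right; apply Fin.ext; rw [succ_val]; exact h.symm

lemma d_step [NeZero m] {t a x : Fin m} (h : (cycleGraph m).Adj a x)
    (hx : (x - t).val ≠ 0) (ha : (a - t).val ≠ 0) :
    (x - t).val = (a - t).val + 1 ∨ (a - t).val = (x - t).val + 1 := by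
  have key : ∀ p q : Fin m, p = q + 1 → (p - t).val ≠ 0 →
      (p - t).val = (q - t).val + 1 := by
    intro p q hpq hp
    have h1 : p - t = (q - t) + 1 := by rw [hpq]; abel
    have h2 : (p - t).val = ((q - t).val + 1) % m := by rw [h1, succ_val]
    rcases Nat.lt_or_ge ((q - t).val + 1) m with hlt | hge
    · rw [h2, Nat.mod_eq_of_lt hlt]
    · exfalso; apply hp
      have : (q - t).val + 1 = m := by have := (q - t).isLt; omega
      rw [h2, this, Nat.mod_self]
  rcases cyc_adj_fin h with h1 | h1
  · exact Or.inl (key _ _ h1 hx)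
  · exact Or.inr (key _ _ h1 ha)

lemma walk_ivt [NeZero m] (t : Fin m) : ∀ {a b : Fin m} (p : (cycleGraph m).Walk a b),
    (∀ v ∈ p.support, (v - t).val ≠ 0) → ∀ c : ℕ,
    (((a - t).val ≤ c ∧ c ≤ (b - t).val) ∨ ((b - t).val ≤ c ∧ c ≤ (a - t).val)) →
    ∃ v ∈ p.support, (v - t).val = c := by
  intro a b p
  induction p with
  | @nil u =>
    intro _ c hc
    exact ⟨u, by simp, by omega⟩
  | @cons u v w h p ih =>
    intro h0 c hc
    by_cases hcu : c = (u - t).val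
    · exact ⟨u, by simp, hcu.symm⟩
    · have hu : (u - t).val ≠ 0 := h0 u (by simp)
      have hv : (v - t).val ≠ 0 := h0 v (by simp)
      have step := d_step h hv hu
      have hc' : ((v - t).val ≤ c ∧ c ≤ (w - t).val) ∨
          ((w - t).val ≤ c ∧ c ≤ (v - t).val) := by omega
      obtain ⟨x, hx, hxc⟩ := ih (fun x hx => h0 x (by simp [hx])) c hc'
      exact ⟨x, by simp [hx], hxc⟩

lemma exits_unique [NeZero m] {S : Finset (Fin m)}
    (hconn : ((cycleGraph m).induce (S : Set (Fin m))).Connected)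
    {a b : Fin m} (ha : a ∈ S) (hb : b ∈ S) (ha1 : a + 1 ∉ S) (hb1 : b + 1 ∉ S) :
    a = b := by
  by_contra hab
  set t := a + 1 with ht
  obtain ⟨q⟩ := hconn.preconnected ⟨a, ha⟩ ⟨b, hb⟩
  let p : (cycleGraph m).Walk a b := q.map (SimpleGraph.Embedding.induce (S : Set (Fin m))).toHom
  have hsup : ∀ v ∈ p.support, v ∈ S := by
    intro v hv
    replace hv : v ∈ (q.map (SimpleGraph.Embedding.induce (S : Set (Fin m))).toHom).support := hv
    rw [SimpleGraph.Walk.support_map] at hv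
    obtain ⟨⟨w, hw⟩, -, rfl⟩ := List.mem_map.mp hv
    exact hw
  have h0 : ∀ v ∈ p.support, (v - t).val ≠ 0 := by
    intro v hv hveq
    have : v - t = 0 := Fin.ext (by simpa using hveq)
    have : v = t := by rwa [sub_eq_zero] at this
    exact ha1 (this ▸ hsup v hv)
  have hda : a - t = -1 := by rw [ht]; abel
  have hdaval : (a - t).val = m - 1 := by
    rw [hda]
    have : ((-1 : Fin m)).val = m - 1 := by
      rw [show (-1 : Fin m) = 0 - 1 by abel, Fin.sub_def]
      simp [Fin.val_one', Nat.mod_eq_of_lt]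
      rcases Nat.lt_or_ge 1 m with h | h
      · rw [Nat.mod_eq_of_lt h, Nat.mod_eq_of_lt (by omega)]
      · interval_cases m
        · exact absurd rfl (NeZero.ne 0)
        · simp
    exact this
  have hdb0 : (b - t).val ≠ 0 := h0 b p.end_mem_support
  have hdbne : (b - t).val ≠ m - 1 := by
    intro hd
    apply hab
    have : b - t = a - t := Fin.ext (by rw [hd, hdaval])
    have := sub_left_injective this
    exact this.symm
  have hm1 : (b - t).val < m := (b - t).isLt
  obtain ⟨v, hvsup, hvd⟩ := walk_ivt t p h0 ((b - t).val + 1)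
    (Or.inr ⟨by omega, by omega⟩)
  have hvb : v = b + 1 := by
    have h1 : (b + 1 - t : Fin m) = (b - t) + 1 := by abel
    have h2 : (b + 1 - t : Fin m).val = (b - t).val + 1 := by
      rw [h1, succ_val, Nat.mod_eq_of_lt (by omega)]
    have : (v - t) = (b + 1 - t : Fin m) := Fin.ext (by rw [hvd, h2])
    have := sub_left_injective this
    exact this
  exact hb1 (hvb ▸ hsup v hvsup)

end aux
section count
variable {k : ℕ}

lemma two_dvd (k : ℕ) : (2 : ℕ) ∣ 2 * k := ⟨k, rfl⟩

lemma succ_parity (hk : 1 ≤ k) (v : Fin (2 * k)) :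
    haveI : NeZero (2 * k) := ⟨by omega⟩
    ((v + 1 : Fin (2 * k))).val % 2 = (v.val + 1) % 2 := by
  haveI : NeZero (2 * k) := ⟨by omega⟩
  rw [succ_val, Nat.mod_mod_of_dvd _ (two_dvd k)]

lemma cards_eq (hk : 1 ≤ k) :
    (Finset.univ.filter (fun v : Fin (2 * k) => v.val % 2 = 0)).card = k ∧
    (Finset.univ.filter (fun v : Fin (2 * k) => v.val % 2 = 1)).card = k := by
  haveI : NeZero (2 * k) := ⟨by omega⟩
  set E := Finset.univ.filter (fun v : Fin (2 * k) => v.val % 2 = 0) with hE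
  set O := Finset.univ.filter (fun v : Fin (2 * k) => v.val % 2 = 1) with hO
  have hsum : E.card + O.card = 2 * k := by
    have := Finset.card_filter_add_card_filter_not
      (s := (Finset.univ : Finset (Fin (2 * k)))) (p := fun v => v.val % 2 = 0)
    rw [Finset.card_univ, Fintype.card_fin] at this
    have heq : Finset.univ.filter (fun a : Fin (2 * k) => ¬ a.val % 2 = 0) = O := by
      rw [hO]
      apply Finset.filter_congr
      intro v _
      constructor <;> (intro h; omega)
    rw [heq] at this
    rw [hE, hO]
    exact this
  have hinj : Set.InjOn (fun v : Fin (2 * k) => v + 1) ↑E ∧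
      Set.InjOn (fun v : Fin (2 * k) => v + 1) ↑O :=
    ⟨fun x _ y _ h => by simpa using h, fun x _ y _ h => by simpa using h⟩
  have hEO : E.card ≤ O.card := by
    apply Finset.card_le_card_of_injOn (fun v => v + 1) _ hinj.1
    intro v hv
    rw [hE, Finset.mem_coe, Finset.mem_filter] at hv
    rw [hO, Finset.mem_coe, Finset.mem_filter]
    refine ⟨Finset.mem_univ _, ?_⟩
    rw [succ_parity hk]
    omega
  have hOE : O.card ≤ E.card := by
    apply Finset.card_le_card_of_injOn (fun v => v + 1) _ hinj.2
    intro v hv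
    rw [hO, Finset.mem_coe, Finset.mem_filter] at hv
    rw [hE, Finset.mem_coe, Finset.mem_filter]
    refine ⟨Finset.mem_univ _, ?_⟩
    rw [succ_parity hk]
    omega
  omega

lemma count_bound (hk : 1 ≤ k) (S : Finset (Fin (2 * k)))
    (hS : ConnB (cycleGraph (2 * k)) S) :
    (S.filter (fun v => v.val % 2 = 1)).card ≤ (S.filter (fun v => v.val % 2 = 0)).card + 1 := by
  haveI : NeZero (2 * k) := ⟨by omega⟩
  rcases hS with rfl | hconn
  · simp
  · set exits := S.filter (fun v => v + 1 ∉ S) with hex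
    have hexcard : exits.card ≤ 1 := by
      rw [Finset.card_le_one]
      intro a ha b hb
      rw [hex, Finset.mem_filter] at ha hb
      exact exits_unique hconn ha.1 hb.1 ha.2 hb.2
    have hsplit : S.filter (fun v => v.val % 2 = 1) ⊆
        (S.filter (fun v => v.val % 2 = 1 ∧ v + 1 ∈ S)) ∪ exits := by
      intro v hv
      rw [Finset.mem_filter] at hv
      by_cases h1 : v + 1 ∈ S
      · exact Finset.mem_union_left _ (Finset.mem_filter.mpr ⟨hv.1, hv.2, h1⟩)
      · exact Finset.mem_union_right _ (Finset.mem_filter.mpr ⟨hv.1, h1⟩)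
    have h1 : (S.filter (fun v => v.val % 2 = 1 ∧ v + 1 ∈ S)).card ≤
        (S.filter (fun v => v.val % 2 = 0)).card := by
      apply Finset.card_le_card_of_injOn (fun v => v + 1)
      · intro v hv
        rw [Finset.mem_coe, Finset.mem_filter] at hv ⊢
        refine ⟨hv.2.2, ?_⟩
        rw [succ_parity hk]
        omega
      · intro x _ y _ h
        simpa using h
    calc (S.filter (fun v => v.val % 2 = 1)).card
        ≤ ((S.filter (fun v => v.val % 2 = 1 ∧ v + 1 ∈ S)) ∪ exits).card :=
          Finset.card_le_card hsplit
      _ ≤ (S.filter (fun v => v.val % 2 = 1 ∧ v + 1 ∈ S)).card + exits.card :=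
          Finset.card_union_le _ _
      _ ≤ (S.filter (fun v => v.val % 2 = 0)).card + 1 := by omega

end count

/-- on a cycle with `2k` vertices where agent 0 values the `k` even-indexed
vertices at `1/k` each and agent 1 values the `k` odd-indexed vertices at `1/k` each, some
allocation has utilitarian welfare `2`, while every connected allocation has utilitarian
welfare at most `(k+1)/k`.  Hence the utilitarian price of connectivity of the cycle on `2k`
vertices is at least `2k/(k+1)`. -/
theorem util_poc_even_cycle_lower (k : ℕ) (hk : 1 ≤ k)
    (u : Fin 2 → Fin (2 * k) → ℝ)
    (hu0 : ∀ v : Fin (2 * k), u 0 v = if v.val % 2 = 0 then ((k : ℝ))⁻¹ else 0)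
    (hu1 : ∀ v : Fin (2 * k), u 1 v = if v.val % 2 = 1 then ((k : ℝ))⁻¹ else 0) :
    (∃ A : Fin 2 → Finset (Fin (2 * k)), IsAlloc A ∧ ∑ i, ∑ v ∈ A i, u i v = 2) ∧
    (∀ B : Fin 2 → Finset (Fin (2 * k)), IsAlloc B →
      (∀ i, ConnB (cycleGraph (2 * k)) (B i)) →
      ∑ i, ∑ v ∈ B i, u i v ≤ ((k : ℝ) + 1) / k) := by
  haveI : NeZero (2 * k) := ⟨by omega⟩
  have hk0 : (k : ℝ) ≠ 0 := Nat.cast_ne_zero.mpr (by omega)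
  have hsum0 : ∀ S : Finset (Fin (2 * k)), ∑ v ∈ S, u 0 v =
      ((S.filter (fun v => v.val % 2 = 0)).card : ℝ) * (k : ℝ)⁻¹ := by
    intro S
    simp only [hu0]
    rw [← Finset.sum_filter, Finset.sum_const, nsmul_eq_mul]
  have hsum1 : ∀ S : Finset (Fin (2 * k)), ∑ v ∈ S, u 1 v =
      ((S.filter (fun v => v.val % 2 = 1)).card : ℝ) * (k : ℝ)⁻¹ := by
    intro S
    simp only [hu1]
    rw [← Finset.sum_filter, Finset.sum_const, nsmul_eq_mul]
  obtain ⟨hcE, hcO⟩ := cards_eq hk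
  constructor
  · refine ⟨![Finset.univ.filter (fun v : Fin (2 * k) => v.val % 2 = 0),
      Finset.univ.filter (fun v : Fin (2 * k) => v.val % 2 = 1)], ⟨?_, ?_⟩, ?_⟩
    · intro i j hij
      fin_cases i <;> fin_cases j <;> simp_all <;>
        · rw [Finset.disjoint_left]
          intro v hv hv'
          rw [Finset.mem_filter] at hv hv'
          omega
    · ext v
      simp only [Finset.mem_biUnion, Finset.mem_univ, iff_true]
      by_cases h : v.val % 2 = 0
      · exact ⟨0, by simp [Finset.mem_filter, h]⟩
      · exact ⟨1, by simp [Finset.mem_filter]; omega⟩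
    · rw [Fin.sum_univ_two]
      simp only [Matrix.cons_val_zero, Matrix.cons_val_one, Matrix.head_cons]
      rw [hsum0, hsum1]
      have h00 : (Finset.univ.filter (fun v : Fin (2 * k) => v.val % 2 = 0)).filter
          (fun v => v.val % 2 = 0) = Finset.univ.filter (fun v : Fin (2 * k) => v.val % 2 = 0) := by
        rw [Finset.filter_filter]
        apply Finset.filter_congr
        intro v _
        simp
      have h11 : (Finset.univ.filter (fun v : Fin (2 * k) => v.val % 2 = 1)).filter
          (fun v => v.val % 2 = 1) = Finset.univ.filter (fun v : Fin (2 * k) => v.val % 2 = 1) := by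
        rw [Finset.filter_filter]
        apply Finset.filter_congr
        intro v _
        simp
      rw [h00, h11, hcE, hcO]
      field_simp
      ring
  · intro B hB hConn
    rw [Fin.sum_univ_two, hsum0, hsum1]
    set e0 := ((B 0).filter (fun v => v.val % 2 = 0)).card with he0
    set e1 := ((B 1).filter (fun v => v.val % 2 = 0)).card with he1
    set o1 := ((B 1).filter (fun v => v.val % 2 = 1)).card with ho1
    have hunion : B 0 ∪ B 1 = Finset.univ := by
      rw [← hB.2]
      ext v
      simp [Fin.exists_fin_two]
    have hdisj : Disjoint (B 0) (B 1) := hB.1 0 1 (by decide)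
    have hek : e0 + e1 = k := by
      rw [he0, he1, ← Finset.card_union_of_disjoint
        (Finset.disjoint_filter_filter hdisj), ← Finset.filter_union, hunion, hcE]
    have ho : o1 ≤ e1 + 1 := count_bound hk (B 1) (hConn 1)
    have hkey : e0 + o1 ≤ k + 1 := by omega
    have : (e0 : ℝ) * (k : ℝ)⁻¹ + (o1 : ℝ) * (k : ℝ)⁻¹ = ((e0 + o1 : ℕ) : ℝ) * (k : ℝ)⁻¹ := by
      push_cast
      ring
    rw [this]
    rw [div_eq_mul_inv]
    apply mul_le_mul_of_nonneg_right _ (by positivity)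
    have : ((e0 + o1 : ℕ) : ℝ) ≤ ((k + 1 : ℕ) : ℝ) := Nat.cast_le.mpr hkey
    push_cast at this ⊢
    linarith
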